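/- Let (R, 𝔪) be a commutative local ring with unity, S ⊆ R a nonempty proper subset, and f ∈ R[X] a polynomial with f(r) = 1 for all r ∈ S and f(r) = 0 for all r ∉ S. Then the indicator function of S factors through the residue field: for all a, b ∈ R, if a − b ∈ 𝔪 then a ∈ S if and only if b ∈ S. -/
import Mathlib

/-- **Remark 2.8.** Any nontrivial polynomial characteristic function of a commutative local
ring `(R, 𝔪)` factors through the residue field `R/𝔪`: if `a ≡ b (mod 𝔪)` then `a ∈ S ↔ b ∈ S`. -/
theorem stmt_15 {R : Type*} [CommRing R] [IsLocalRing R]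
    (S : Set R) (hS : S.Nonempty) (hS' : S ≠ Set.univ) (f : Polynomial R)
    (hf1 : ∀ r ∈ S, f.eval r = 1) (hf0 : ∀ r ∉ S, f.eval r = 0) :
    ∀ a b : R, a - b ∈ IsLocalRing.maximalIdeal R → (a ∈ S ↔ b ∈ S) := by
  have key : ∀ a b : R, a - b ∈ IsLocalRing.maximalIdeal R → a ∈ S → b ∈ S := by
    intro a b hm ha
    by_contra hb
    have hd : a - b ∣ f.eval a - f.eval b := Polynomial.sub_dvd_eval_sub a b f
    rw [hf1 a ha, hf0 b hb, sub_zero] at hd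
    have h1 : (1 : R) ∈ IsLocalRing.maximalIdeal R :=
      Ideal.mem_of_dvd _ hd hm
    exact (IsLocalRing.maximalIdeal.isMaximal R).ne_top ((Ideal.eq_top_iff_one _).mpr h1)
  intro a b hm
  exact ⟨key a b hm, key b a (by simpa using neg_mem hm)⟩
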